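/- arXiv:1607.08521 — 2 statements merged into one kernel-verified Lean document; each statement's English description precedes it below -/
import Mathlib

section
/- As x → ∞, ∑_{1 ≤ n ≤ x/2} 1/(n² log(x/n)) = (π²/6)·(1/log x) + O(1/log² x). -/
set_option maxHeartbeats 1000000

open Filter Asymptotics Finset


lemma log_le_four_rpow (n : ℕ) : Real.log n ≤ 4 * (n : ℝ) ^ ((4:ℝ)⁻¹) := by
  rcases Nat.eq_zero_or_pos n with h | h
  · simp [h]
  · have hn : (0:ℝ) < n := by exact_mod_cast h
    have h1 : Real.log ((n:ℝ) ^ ((4:ℝ)⁻¹)) ≤ (n:ℝ) ^ ((4:ℝ)⁻¹) := by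
      have := Real.log_le_sub_one_of_pos (Real.rpow_pos_of_pos hn ((4:ℝ)⁻¹))
      linarith
    have h2 : Real.log ((n:ℝ) ^ ((4:ℝ)⁻¹)) = (4:ℝ)⁻¹ * Real.log n := Real.log_rpow hn _
    nlinarith

lemma log_le_two_rpow (n : ℕ) : Real.log n ≤ 2 * (n : ℝ) ^ ((2:ℝ)⁻¹) := by
  rcases Nat.eq_zero_or_pos n with h | h
  · simp [h]
  · have hn : (0:ℝ) < n := by exact_mod_cast h
    have h1 : Real.log ((n:ℝ) ^ ((2:ℝ)⁻¹)) ≤ (n:ℝ) ^ ((2:ℝ)⁻¹) := by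
      have := Real.log_le_sub_one_of_pos (Real.rpow_pos_of_pos hn ((2:ℝ)⁻¹))
      linarith
    have h2 : Real.log ((n:ℝ) ^ ((2:ℝ)⁻¹)) = (2:ℝ)⁻¹ * Real.log n := Real.log_rpow hn _
    nlinarith

lemma aux_summable_rpow : Summable (fun n : ℕ => ((n:ℝ) ^ ((3:ℝ)/2))⁻¹) :=
  Real.summable_nat_rpow_inv.2 (by norm_num)

lemma summable_log_div_sq : Summable (fun n : ℕ => Real.log n / (n:ℝ) ^ 2) := by
  refine Summable.of_nonneg_of_le ?_ ?_ (aux_summable_rpow.mul_left 2)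
  · intro n
    exact div_nonneg (Real.log_natCast_nonneg n) (by positivity)
  · intro n
    rcases Nat.eq_zero_or_pos n with h | h
    · simp [h]
    · have hn : (0:ℝ) < n := by exact_mod_cast h
      rw [div_le_iff₀ (by positivity)]
      have key : ((n:ℝ) ^ ((3:ℝ)/2))⁻¹ * (n:ℝ) ^ 2 = (n:ℝ) ^ ((2:ℝ)⁻¹) := by
        rw [← Real.rpow_natCast (n:ℝ) 2, ← Real.rpow_neg hn.le, ← Real.rpow_add hn]
        norm_num
      calc Real.log n ≤ 2 * (n:ℝ) ^ ((2:ℝ)⁻¹) := log_le_two_rpow n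
        _ = 2 * ((n:ℝ) ^ ((3:ℝ)/2))⁻¹ * (n:ℝ) ^ 2 := by rw [mul_assoc, key]

lemma summable_logsq_div_sq : Summable (fun n : ℕ => (Real.log n) ^ 2 / (n:ℝ) ^ 2) := by
  refine Summable.of_nonneg_of_le ?_ ?_ (aux_summable_rpow.mul_left 16)
  · intro n
    positivity
  · intro n
    rcases Nat.eq_zero_or_pos n with h | h
    · simp [h]
    · have hn : (0:ℝ) < n := by exact_mod_cast h
      have hln : 0 ≤ Real.log n := Real.log_natCast_nonneg n
      rw [div_le_iff₀ (by positivity)]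
      have key : ((n:ℝ) ^ ((3:ℝ)/2))⁻¹ * (n:ℝ) ^ 2 = (n:ℝ) ^ ((2:ℝ)⁻¹) := by
        rw [← Real.rpow_natCast (n:ℝ) 2, ← Real.rpow_neg hn.le, ← Real.rpow_add hn]
        norm_num
      have sq4 : ((n:ℝ) ^ ((4:ℝ)⁻¹)) ^ 2 = (n:ℝ) ^ ((2:ℝ)⁻¹) := by
        rw [← Real.rpow_natCast ((n:ℝ) ^ ((4:ℝ)⁻¹)) 2, ← Real.rpow_mul hn.le]
        norm_num
      calc (Real.log n) ^ 2 ≤ (4 * (n:ℝ) ^ ((4:ℝ)⁻¹)) ^ 2 := by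
            have := log_le_four_rpow n; nlinarith
        _ = 16 * (n:ℝ) ^ ((2:ℝ)⁻¹) := by rw [mul_pow, sq4]; norm_num
        _ = 16 * ((n:ℝ) ^ ((3:ℝ)/2))⁻¹ * (n:ℝ) ^ 2 := by rw [mul_assoc, key]


lemma basel_tail (N : ℕ) :
    Real.pi ^ 2 / 6 - ∑ n ∈ Finset.Icc 1 N, 1 / (n:ℝ) ^ 2 ≤ 2 / ((N:ℝ) + 1) := by
  have hs := hasSum_zeta_two
  have hsum : Summable (fun n : ℕ => 1 / (n:ℝ) ^ 2) := hs.summable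
  have hrange : ∑ n ∈ Finset.range (N + 1), 1 / (n:ℝ) ^ 2
      = ∑ n ∈ Finset.Icc 1 N, 1 / (n:ℝ) ^ 2 := by
    rw [Finset.range_eq_Ico, Finset.sum_eq_sum_Ico_succ_bot (Nat.succ_pos N)]
    rw [← Finset.Ico_add_one_right_eq_Icc]
    norm_num
  have key := hsum.sum_add_tsum_nat_add (N + 1)
  have htail : ∑' i : ℕ, 1 / ((i + (N + 1) : ℕ) : ℝ) ^ 2 ≤ 2 / ((N:ℝ) + 1) := by
    refine Summable.tsum_le_of_sum_le ((summable_nat_add_iff (N+1)).2 hsum) (fun s => ?_)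
    obtain ⟨m, hm⟩ := s.exists_nat_subset_range
    calc ∑ i ∈ s, 1 / ((i + (N + 1) : ℕ) : ℝ) ^ 2
        ≤ ∑ i ∈ Finset.range m, 1 / ((i + (N + 1) : ℕ) : ℝ) ^ 2 :=
          Finset.sum_le_sum_of_subset_of_nonneg hm (fun i _ _ => by positivity)
      _ = ∑ j ∈ Finset.Ico (N + 1) (N + 1 + m), 1 / (j:ℝ) ^ 2 := by
          rw [Finset.sum_Ico_eq_sum_range]
          simp [add_comm]
      _ = ∑ j ∈ Finset.Ioo N (N + 1 + m), ((j:ℝ) ^ 2)⁻¹ := by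
          rw [← Finset.Ico_add_one_left_eq_Ioo]
          simp [one_div]
      _ ≤ 2 / ((N:ℝ) + 1) := by
          have h := sum_Ioo_inv_sq_le (α := ℝ) N (N + 1 + m)
          push_cast at h ⊢
          exact h
  have hpi : Real.pi ^ 2 / 6 = ∑' n : ℕ, 1 / (n:ℝ) ^ 2 := hs.tsum_eq.symm
  push_cast at key htail hrange hpi ⊢
  linarith

theorem sum_inv_nsq_log_asymptotic :
    (fun x : ℝ => (∑ n ∈ Finset.Icc 1 ⌊x / 2⌋₊, 1 / ((n : ℝ) ^ 2 * Real.log (x / n))) -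
        (Real.pi ^ 2 / 6) * (1 / Real.log x)) =O[atTop]
      (fun x : ℝ => 1 / (Real.log x) ^ 2) := by
  have hlog2 : 0 < Real.log 2 := Real.log_pos (by norm_num)
  set C1 : ℝ := ∑' n : ℕ, Real.log n / (n:ℝ) ^ 2 with hC1
  set C2 : ℝ := ∑' n : ℕ, (Real.log n) ^ 2 / (n:ℝ) ^ 2 with hC2
  rw [isBigO_iff]
  refine ⟨1 + C1 + C2 / Real.log 2, ?_⟩
  have hlittle := Real.isLittleO_log_id_atTop.def (by norm_num : (0:ℝ) < 1/4)
  filter_upwards [eventually_ge_atTop (3:ℝ), hlittle] with x hx3 hxlog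
  have hx0 : (0:ℝ) < x := by linarith
  have hL1 : 1 ≤ Real.log x := by
    have he : Real.exp 1 ≤ x := by
      have := Real.exp_one_lt_d9
      linarith
    calc (1:ℝ) = Real.log (Real.exp 1) := (Real.log_exp 1).symm
      _ ≤ Real.log x := Real.log_le_log (Real.exp_pos 1) he
  set L := Real.log x with hLdef
  have hL0 : 0 < L := by linarith
  have h4L : 4 * L ≤ x := by
    rw [Real.norm_eq_abs, Real.norm_eq_abs, id_eq, abs_of_pos hx0,
      abs_of_pos (by linarith : (0:ℝ) < L)] at hxlog
    linarith
  set N := ⌊x / 2⌋₊ with hNdef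
  -- per-term facts and the sum decomposition
  have hsum_eq : ∑ n ∈ Finset.Icc 1 N, 1 / ((n : ℝ) ^ 2 * Real.log (x / n))
      = (∑ n ∈ Finset.Icc 1 N, 1 / (n:ℝ) ^ 2) * (1 / L)
        + (∑ n ∈ Finset.Icc 1 N, Real.log n / (n:ℝ) ^ 2) * (1 / L ^ 2)
        + (∑ n ∈ Finset.Icc 1 N, (Real.log n) ^ 2 / ((n:ℝ) ^ 2 * (L - Real.log n)))
            * (1 / L ^ 2) := by
    rw [Finset.sum_mul, Finset.sum_mul, Finset.sum_mul, ← Finset.sum_add_distrib,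
      ← Finset.sum_add_distrib]
    refine Finset.sum_congr rfl (fun n hn => ?_)
    rw [Finset.mem_Icc] at hn
    have hn1 : 1 ≤ n := hn.1
    have hna : (1:ℝ) ≤ (n:ℝ) := by exact_mod_cast hn1
    have hnx : (n:ℝ) ≤ x / 2 := by
      calc (n:ℝ) ≤ (N:ℝ) := by exact_mod_cast hn.2
        _ ≤ x / 2 := Nat.floor_le (by linarith)
    have hlogdiv : Real.log (x / n) = L - Real.log n :=
      Real.log_div (ne_of_gt hx0) (by positivity)
    have hlub : Real.log n ≤ L - Real.log 2 := by
      have h1 : Real.log n ≤ Real.log (x / 2) := Real.log_le_log (by linarith) hnx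
      rw [Real.log_div (ne_of_gt hx0) (by norm_num)] at h1
      linarith
    have hpos : 0 < L - Real.log n := by linarith
    rw [hlogdiv]
    have hn0 : (n:ℝ) ≠ 0 := by linarith
    field_simp
    ring
  rw [hsum_eq]
  set A := ∑ n ∈ Finset.Icc 1 N, 1 / (n:ℝ) ^ 2 with hA
  set B := ∑ n ∈ Finset.Icc 1 N, Real.log n / (n:ℝ) ^ 2 with hB
  set R := ∑ n ∈ Finset.Icc 1 N, (Real.log n) ^ 2 / ((n:ℝ) ^ 2 * (L - Real.log n)) with hR
  -- bounds
  have hAle : A ≤ Real.pi ^ 2 / 6 := by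
    rw [hA, ← hasSum_zeta_two.tsum_eq]
    exact Summable.sum_le_tsum _ (fun i _ => by positivity) hasSum_zeta_two.summable
  have htail : Real.pi ^ 2 / 6 - A ≤ 1 / L := by
    have h1 := basel_tail N
    have h2 : x / 2 < (N:ℝ) + 1 := Nat.lt_floor_add_one (x / 2)
    have h3 : 2 / ((N:ℝ) + 1) ≤ 4 / x := by
      rw [div_le_div_iff₀ (by linarith) hx0]
      nlinarith
    have h4 : 4 / x ≤ 1 / L := by
      rw [div_le_div_iff₀ hx0 hL0]
      linarith
    linarith
  have hBnn : 0 ≤ B := Finset.sum_nonneg (fun i _ =>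
    div_nonneg (Real.log_natCast_nonneg i) (by positivity))
  have hBle : B ≤ C1 := by
    rw [hB, hC1]
    exact Summable.sum_le_tsum _ (fun i _ => div_nonneg (Real.log_natCast_nonneg i) (by positivity))
      summable_log_div_sq
  have hRnn : 0 ≤ R := by
    refine Finset.sum_nonneg (fun i hi => ?_)
    rw [Finset.mem_Icc] at hi
    have hna : (1:ℝ) ≤ (i:ℝ) := by exact_mod_cast hi.1
    have hnx : (i:ℝ) ≤ x / 2 := by
      calc (i:ℝ) ≤ (N:ℝ) := by exact_mod_cast hi.2
        _ ≤ x / 2 := Nat.floor_le (by linarith)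
    have h1 : Real.log i ≤ Real.log (x / 2) := Real.log_le_log (by linarith) hnx
    rw [Real.log_div (ne_of_gt hx0) (by norm_num)] at h1
    have : 0 < L - Real.log i := by linarith
    positivity
  have hRle : R ≤ C2 / Real.log 2 := by
    have hstep : R ≤ (∑ n ∈ Finset.Icc 1 N, (Real.log n) ^ 2 / (n:ℝ) ^ 2) / Real.log 2 := by
      rw [hR, Finset.sum_div]
      refine Finset.sum_le_sum (fun i hi => ?_)
      rw [Finset.mem_Icc] at hi
      have hna : (1:ℝ) ≤ (i:ℝ) := by exact_mod_cast hi.1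
      have hnx : (i:ℝ) ≤ x / 2 := by
        calc (i:ℝ) ≤ (N:ℝ) := by exact_mod_cast hi.2
          _ ≤ x / 2 := Nat.floor_le (by linarith)
      have h1 : Real.log i ≤ Real.log (x / 2) := Real.log_le_log (by linarith) hnx
      rw [Real.log_div (ne_of_gt hx0) (by norm_num)] at h1
      have hd : Real.log 2 ≤ L - Real.log i := by linarith
      rw [div_div]
      exact div_le_div_of_nonneg_left (by positivity) (by positivity)
        (by nlinarith)
    have hsle : (∑ n ∈ Finset.Icc 1 N, (Real.log n) ^ 2 / (n:ℝ) ^ 2) ≤ C2 := by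
      rw [hC2]
      exact Summable.sum_le_tsum _ (fun i _ => by positivity) summable_logsq_div_sq
    calc R ≤ _ := hstep
      _ ≤ C2 / Real.log 2 := by gcongr
  have hC1nn : 0 ≤ C1 := tsum_nonneg (fun i =>
    div_nonneg (Real.log_natCast_nonneg i) (by positivity))
  have hC2nn : 0 ≤ C2 := tsum_nonneg (fun i => by positivity)
  have hu : (0:ℝ) < 1 / L := by positivity
  have hu2 : (0:ℝ) < 1 / L ^ 2 := by positivity
  rw [Real.norm_eq_abs, Real.norm_eq_abs, abs_of_pos hu2, abs_le]
  have k1 : (Real.pi ^ 2 / 6 - A) * (1 / L) ≤ (1 / L) * (1 / L) :=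
    mul_le_mul_of_nonneg_right htail hu.le
  have k2 : (1:ℝ) / L * (1 / L) = 1 / L ^ 2 := by
    rw [div_mul_div_comm, one_mul, sq]
  have k3 : B * (1 / L ^ 2) ≤ C1 * (1 / L ^ 2) := mul_le_mul_of_nonneg_right hBle hu2.le
  have k4 : R * (1 / L ^ 2) ≤ C2 / Real.log 2 * (1 / L ^ 2) :=
    mul_le_mul_of_nonneg_right hRle hu2.le
  have k5 : 0 ≤ B * (1 / L ^ 2) := mul_nonneg hBnn hu2.le
  have k6 : 0 ≤ R * (1 / L ^ 2) := mul_nonneg hRnn hu2.le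
  have k7 : (A - Real.pi ^ 2 / 6) * (1 / L) ≤ 0 :=
    mul_nonpos_of_nonpos_of_nonneg (by linarith) hu.le
  have k8 : (A - Real.pi ^ 2 / 6) * (1 / L) = A * (1 / L) - Real.pi ^ 2 / 6 * (1 / L) := by
    ring
  have k8' : (Real.pi ^ 2 / 6 - A) * (1 / L)
      = Real.pi ^ 2 / 6 * (1 / L) - A * (1 / L) := by ring
  have k9 : (1 + C1 + C2 / Real.log 2) * (1 / L ^ 2)
      = 1 / L ^ 2 + C1 * (1 / L ^ 2) + C2 / Real.log 2 * (1 / L ^ 2) := by ring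
  have k10 : 0 ≤ C1 * (1 / L ^ 2) := mul_nonneg hC1nn hu2.le
  have k11 : 0 ≤ C2 / Real.log 2 * (1 / L ^ 2) :=
    mul_nonneg (div_nonneg hC2nn hlog2.le) hu2.le
  constructor <;> linarith
end

section
/- As x → ∞, ∫_1^{x/2} dt/(t² log²(x/t)) = O(1/log² x). -/
open Filter Asymptotics intervalIntegral

lemma integral_inv_sq' {a b : ℝ} (ha : 0 < a) (hab : a ≤ b) :
    ∫ t in a..b, (t ^ 2)⁻¹ = a⁻¹ - b⁻¹ := by
  have h0 : (0:ℝ) ∉ Set.uIcc a b := by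
    rw [Set.uIcc_of_le hab]
    rintro ⟨h1, h2⟩
    linarith
  have key : ∫ t in a..b, t ^ (-2 : ℤ) =
      (b ^ ((-2 : ℤ) + 1) - a ^ ((-2 : ℤ) + 1)) / (((-2 : ℤ) : ℝ) + 1) :=
    integral_zpow (Or.inr ⟨by decide, h0⟩)
  have hb : 0 < b := lt_of_lt_of_le ha hab
  have e : ∀ t : ℝ, (t:ℝ) ^ (-2 : ℤ) = (t ^ 2)⁻¹ := fun t => by
    rw [zpow_neg, zpow_two, pow_two]
  calc ∫ t in a..b, (t ^ 2)⁻¹ = ∫ t in a..b, t ^ (-2 : ℤ) := by simp_rw [e]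
    _ = (b ^ ((-2 : ℤ) + 1) - a ^ ((-2 : ℤ) + 1)) / (((-2 : ℤ) : ℝ) + 1) := key
    _ = a⁻¹ - b⁻¹ := by
        norm_num [zpow_neg]
        ring

lemma logsq_le_sqrt' {x : ℝ} (hx : 1 ≤ x) : (Real.log x) ^ 2 ≤ 16 * Real.sqrt x := by
  have h0 : (0:ℝ) < x := lt_of_lt_of_le one_pos hx
  set y := Real.sqrt (Real.sqrt x) with hy
  have hsx1 : (1:ℝ) ≤ Real.sqrt x := by
    nlinarith [Real.sq_sqrt h0.le, Real.sqrt_nonneg x]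
  have hy1 : (1:ℝ) ≤ y := by
    nlinarith [Real.sq_sqrt (Real.sqrt_nonneg x), Real.sqrt_nonneg (Real.sqrt x)]
  have hylog : Real.log x = 4 * Real.log y := by
    rw [hy, Real.log_sqrt (Real.sqrt_nonneg x), Real.log_sqrt h0.le]; ring
  have hle : Real.log y ≤ y := by
    have := Real.log_le_sub_one_of_pos (show (0:ℝ) < y by linarith)
    linarith
  have hsq : y ^ 2 = Real.sqrt x := Real.sq_sqrt (Real.sqrt_nonneg x)
  have hlog0 : 0 ≤ Real.log y := Real.log_nonneg hy1
  rw [hylog]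
  nlinarith [hle, hlog0]

theorem integral_one_div_tsq_logsq_isBigO :
    (fun x : ℝ => ∫ t in (1 : ℝ)..(x / 2), 1 / (t ^ 2 * (Real.log (x / t)) ^ 2)) =O[atTop]
      (fun x : ℝ => 1 / (Real.log x) ^ 2) := by
  rw [isBigO_iff]
  refine ⟨4 + 16 / Real.log 2 ^ 2, ?_⟩
  filter_upwards [eventually_ge_atTop (4:ℝ)] with x hx
  have hx0 : (0:ℝ) < x := by linarith
  set s := Real.sqrt x with hs
  set L := Real.log x with hLdef
  have hs2 : 2 ≤ s := by
    have h4 : Real.sqrt 4 = 2 := by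
      rw [show (4:ℝ) = 2 ^ 2 by norm_num, Real.sqrt_sq (by norm_num : (0:ℝ) ≤ 2)]
    calc (2:ℝ) = Real.sqrt 4 := h4.symm
      _ ≤ s := Real.sqrt_le_sqrt hx
  have hs0 : (0:ℝ) < s := by linarith
  have hsx : s ^ 2 = x := Real.sq_sqrt hx0.le
  have hs_half : s ≤ x / 2 := by nlinarith
  have hL0 : (0:ℝ) < L := Real.log_pos (by linarith)
  have hlog2 : (0:ℝ) < Real.log 2 := Real.log_pos (by norm_num)
  have hkey : ∀ t ∈ Set.Icc (1:ℝ) (x/2), 0 < t ∧ Real.log 2 ≤ Real.log (x / t) := by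
    intro t ht
    have ht1 : (1:ℝ) ≤ t := ht.1
    have ht2 : t ≤ x / 2 := ht.2
    have ht0 : (0:ℝ) < t := by linarith
    refine ⟨ht0, Real.log_le_log (by norm_num) ?_⟩
    rw [le_div_iff₀ ht0]; linarith
  have hcont : ContinuousOn (fun t => 1 / (t ^ 2 * Real.log (x / t) ^ 2))
      (Set.Icc 1 (x/2)) := by
    apply ContinuousOn.div continuousOn_const
    · exact ((continuous_id.continuousOn.pow 2).mul
        (((continuousOn_const.div continuous_id.continuousOn
          (fun t ht => (hkey t ht).1.ne')).log
          (fun t ht => (div_pos hx0 (hkey t ht).1).ne')).pow 2))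
    · intro t ht
      have h1 := (hkey t ht).1
      have h2 : (0:ℝ) < Real.log (x / t) := lt_of_lt_of_le hlog2 (hkey t ht).2
      exact (mul_pos (pow_pos h1 2) (pow_pos h2 2)).ne'
  have hint : ∀ a b : ℝ, a ∈ Set.Icc (1:ℝ) (x/2) → b ∈ Set.Icc (1:ℝ) (x/2) →
      IntervalIntegrable (fun t => 1 / (t ^ 2 * Real.log (x / t) ^ 2))
        MeasureTheory.volume a b := fun a b ha hb =>
    (hcont.mono (Set.uIcc_subset_Icc ha hb)).intervalIntegrable
  have hmem1 : (1:ℝ) ∈ Set.Icc (1:ℝ) (x/2) := ⟨le_refl _, by linarith⟩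
  have hmems : s ∈ Set.Icc (1:ℝ) (x/2) := ⟨by linarith, hs_half⟩
  have hmem2 : x/2 ∈ Set.Icc (1:ℝ) (x/2) := ⟨by linarith, le_refl _⟩
  -- integrability of comparison functions
  have hinvsq : ∀ a b : ℝ, a ∈ Set.Icc (1:ℝ) (x/2) → b ∈ Set.Icc (1:ℝ) (x/2) →
      ∀ c : ℝ, IntervalIntegrable (fun t : ℝ => c * (t ^ 2)⁻¹) MeasureTheory.volume a b := by
    intro a b ha hb c
    apply ContinuousOn.intervalIntegrable
    apply ContinuousOn.mono _ (Set.uIcc_subset_Icc ha hb)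
    exact continuousOn_const.mul ((continuous_id.continuousOn.pow 2).inv₀
      (fun t ht => by have : (1:ℝ) ≤ t := ht.1; exact (pow_pos (by linarith : (0:ℝ) < t) 2).ne'))
  -- bound on [1, s]
  have hI1 : ∫ t in (1:ℝ)..s, 1 / (t ^ 2 * Real.log (x / t) ^ 2) ≤ 4 / L ^ 2 := by
    have hpt : ∀ t ∈ Set.Icc (1:ℝ) s, 1 / (t ^ 2 * Real.log (x / t) ^ 2)
        ≤ (4 / L ^ 2) * (t ^ 2)⁻¹ := by
      intro t ht
      have ht1 : (1:ℝ) ≤ t := ht.1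
      have hts : t ≤ s := ht.2
      have ht0 : (0:ℝ) < t := by linarith
      have hA : L / 2 ≤ Real.log (x / t) := by
        have hxt : s ≤ x / t := by
          rw [le_div_iff₀ ht0]; nlinarith
        calc L / 2 = Real.log s := by rw [hs, Real.log_sqrt hx0.le]
          _ ≤ Real.log (x / t) := Real.log_le_log hs0 hxt
      have hA0 : (0:ℝ) < Real.log (x / t) := by linarith
      have heq : (4 / L ^ 2) * (t ^ 2)⁻¹ = 1 / (t ^ 2 * (L / 2) ^ 2) := by
        field_simp; ring
      rw [heq]
      apply one_div_le_one_div_of_le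
      · positivity
      · have hsqle : (L/2)^2 ≤ Real.log (x/t)^2 := pow_le_pow_left₀ (by linarith) hA 2
        nlinarith [sq_nonneg t]
    have hmono := intervalIntegral.integral_mono_on (by linarith : (1:ℝ) ≤ s)
      (hint 1 s hmem1 hmems) (hinvsq 1 s hmem1 hmems (4 / L ^ 2)) hpt
    have hval : ∫ t in (1:ℝ)..s, (4 / L ^ 2) * (t ^ 2)⁻¹
        = (4 / L ^ 2) * ((1:ℝ)⁻¹ - s⁻¹) := by
      rw [intervalIntegral.integral_const_mul, integral_inv_sq' one_pos (by linarith)]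
    have hfin : (4 / L ^ 2) * ((1:ℝ)⁻¹ - s⁻¹) ≤ 4 / L ^ 2 := by
      have : (0:ℝ) < s⁻¹ := by positivity
      nlinarith [sq_nonneg L, div_pos (show (0:ℝ) < 4 by norm_num) (pow_pos hL0 2)]
    calc ∫ t in (1:ℝ)..s, 1 / (t ^ 2 * Real.log (x / t) ^ 2)
        ≤ ∫ t in (1:ℝ)..s, (4 / L ^ 2) * (t ^ 2)⁻¹ := hmono
      _ = (4 / L ^ 2) * ((1:ℝ)⁻¹ - s⁻¹) := hval
      _ ≤ 4 / L ^ 2 := hfin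
  -- bound on [s, x/2]
  have hI2 : ∫ t in s..(x/2), 1 / (t ^ 2 * Real.log (x / t) ^ 2)
      ≤ (16 / Real.log 2 ^ 2) / L ^ 2 := by
    have hpt : ∀ t ∈ Set.Icc s (x/2), 1 / (t ^ 2 * Real.log (x / t) ^ 2)
        ≤ ((Real.log 2 ^ 2)⁻¹) * (t ^ 2)⁻¹ := by
      intro t ht
      have htmem : t ∈ Set.Icc (1:ℝ) (x/2) := ⟨by linarith [ht.1], ht.2⟩
      obtain ⟨ht0, hA⟩ := hkey t htmem
      have hA0 : (0:ℝ) < Real.log (x / t) := by linarith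
      have heq : (Real.log 2 ^ 2)⁻¹ * (t ^ 2)⁻¹ = 1 / (t ^ 2 * Real.log 2 ^ 2) := by
        field_simp
      rw [heq]
      apply one_div_le_one_div_of_le
      · positivity
      · have hsqle : Real.log 2 ^ 2 ≤ Real.log (x/t)^2 := pow_le_pow_left₀ hlog2.le hA 2
        nlinarith [sq_nonneg t]
    have hmono := intervalIntegral.integral_mono_on hs_half
      (hint s (x/2) hmems hmem2) (hinvsq s (x/2) hmems hmem2 ((Real.log 2 ^ 2)⁻¹)) hpt
    have hval : ∫ t in s..(x/2), (Real.log 2 ^ 2)⁻¹ * (t ^ 2)⁻¹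
        = (Real.log 2 ^ 2)⁻¹ * (s⁻¹ - (x/2)⁻¹) := by
      rw [intervalIntegral.integral_const_mul, integral_inv_sq' hs0 hs_half]
    have hsinv : s⁻¹ ≤ 16 / L ^ 2 := by
      have h16 : L ^ 2 ≤ 16 * s := logsq_le_sqrt' (by linarith)
      rw [inv_eq_one_div, div_le_div_iff₀ hs0 (pow_pos hL0 2)]
      linarith
    have hfin : (Real.log 2 ^ 2)⁻¹ * (s⁻¹ - (x/2)⁻¹) ≤ (16 / Real.log 2 ^ 2) / L ^ 2 := by
      have hx2 : (0:ℝ) < (x/2)⁻¹ := by positivity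
      have hl2 : (0:ℝ) < (Real.log 2 ^ 2)⁻¹ := by positivity
      calc (Real.log 2 ^ 2)⁻¹ * (s⁻¹ - (x/2)⁻¹) ≤ (Real.log 2 ^ 2)⁻¹ * s⁻¹ := by nlinarith
        _ ≤ (Real.log 2 ^ 2)⁻¹ * (16 / L ^ 2) := by nlinarith
        _ = (16 / Real.log 2 ^ 2) / L ^ 2 := by ring
    calc ∫ t in s..(x/2), 1 / (t ^ 2 * Real.log (x / t) ^ 2)
        ≤ ∫ t in s..(x/2), (Real.log 2 ^ 2)⁻¹ * (t ^ 2)⁻¹ := hmono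
      _ = (Real.log 2 ^ 2)⁻¹ * (s⁻¹ - (x/2)⁻¹) := hval
      _ ≤ (16 / Real.log 2 ^ 2) / L ^ 2 := hfin
  have hsplit : (∫ t in (1:ℝ)..s, 1 / (t ^ 2 * Real.log (x / t) ^ 2))
      + ∫ t in s..(x/2), 1 / (t ^ 2 * Real.log (x / t) ^ 2)
      = ∫ t in (1:ℝ)..(x/2), 1 / (t ^ 2 * Real.log (x / t) ^ 2) :=
    intervalIntegral.integral_add_adjacent_intervals (hint 1 s hmem1 hmems)
      (hint s (x/2) hmems hmem2)
  have hnn : 0 ≤ ∫ t in (1:ℝ)..(x/2), 1 / (t ^ 2 * Real.log (x / t) ^ 2) := by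
    apply intervalIntegral.integral_nonneg (by linarith)
    intro t ht
    positivity
  rw [Real.norm_eq_abs, Real.norm_eq_abs, abs_of_nonneg hnn,
    abs_of_nonneg (by positivity : (0:ℝ) ≤ 1 / L ^ 2)]
  calc ∫ t in (1:ℝ)..(x/2), 1 / (t ^ 2 * Real.log (x / t) ^ 2)
      = (∫ t in (1:ℝ)..s, 1 / (t ^ 2 * Real.log (x / t) ^ 2))
        + ∫ t in s..(x/2), 1 / (t ^ 2 * Real.log (x / t) ^ 2) := hsplit.symm
    _ ≤ 4 / L ^ 2 + (16 / Real.log 2 ^ 2) / L ^ 2 := add_le_add hI1 hI2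
    _ = (4 + 16 / Real.log 2 ^ 2) * (1 / L ^ 2) := by ring
end
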